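/- arXiv:2402.01070 — 5 statements merged into one kernel-verified Lean document; each statement's English description precedes it below -/
import Mathlib

section
/- Let K ≥ 1 and 0 ≤ I ≤ K. Let w^t ∈ ℝ^P, Δw_1, …, Δw_K ∈ ℝ^P, and define w^{t+1} = w^t + (1/K)·Σ_{k=1}^K Δw_k, m^t = (1/P)·⟨w^t, 𝟙⟩, m^{t+1} = (1/P)·⟨w^{t+1}, 𝟙⟩, and the shifted global model ŵ^{t+1} = w^{t+1} − (I/K)·m^{t+1}·𝟙. Define the round-to-round divergences D_FA = ‖w^{t+1} − w^t‖ and D_FS = ‖ŵ^{t+1} − w^t‖. Then D_FA² − D_FS² = (I·P/K)·((2 − I/K)·(m^{t+1})² − 2·m^{t+1}·m^t). -/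
open Finset
open scoped RealInnerProductSpace

/-- **Divergence comparison (Theorem 2 of the paper).**
`D_FA² − D_FS² = (I·P/K)·((2 − I/K)·(m^{t+1})² − 2·m^{t+1}·m^t)`. -/
theorem fedshift_divergence_difference
    (P K I : ℕ) (hK : 1 ≤ K) (hIK : I ≤ K)
    (wt : EuclideanSpace ℝ (Fin P))
    (Δw : Fin K → EuclideanSpace ℝ (Fin P))
    (ones : EuclideanSpace ℝ (Fin P)) (hones : ∀ p, ones p = 1)
    (wt1 : EuclideanSpace ℝ (Fin P))
    (hwt1 : wt1 = wt + (K : ℝ)⁻¹ • ∑ k, Δw k)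
    (mt mt1 : ℝ)
    (hmt : mt = (1 / (P : ℝ)) * ⟪wt, ones⟫)
    (hmt1 : mt1 = (1 / (P : ℝ)) * ⟪wt1, ones⟫)
    (what1 : EuclideanSpace ℝ (Fin P))
    (hwhat1 : what1 = wt1 - (((I : ℝ) / K) * mt1) • ones)
    (DFA DFS : ℝ)
    (hDFA : DFA = ‖wt1 - wt‖)
    (hDFS : DFS = ‖what1 - wt‖) :
    DFA ^ 2 - DFS ^ 2
      = ((I : ℝ) * P / K) * ((2 - (I : ℝ) / K) * mt1 ^ 2 - 2 * mt1 * mt) := by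
  set c : ℝ := ((I : ℝ) / K) * mt1 with hc
  have honesones : ⟪ones, ones⟫ = (P : ℝ) := by
    rw [PiLp.inner_apply]; simp [hones]
  have h1 : ⟪wt1, ones⟫ = (P : ℝ) * mt1 := by
    rcases Nat.eq_zero_or_pos P with hP | hP
    · subst hP
      simp [PiLp.inner_apply]
    · have hP' : (P : ℝ) ≠ 0 := by positivity
      rw [hmt1]; field_simp
  have h2 : ⟪wt, ones⟫ = (P : ℝ) * mt := by
    rcases Nat.eq_zero_or_pos P with hP | hP
    · subst hP
      simp [PiLp.inner_apply]
    · have hP' : (P : ℝ) ≠ 0 := by positivity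
      rw [hmt]; field_simp
  have hv : ⟪wt1 - wt, c • ones⟫ = c * ((P : ℝ) * mt1 - (P : ℝ) * mt) := by
    rw [inner_smul_right, inner_sub_left, h1, h2]
  have hDFS2 : DFS ^ 2 = ‖wt1 - wt‖ ^ 2 - 2 * (c * ((P : ℝ) * mt1 - (P : ℝ) * mt))
      + c ^ 2 * (P : ℝ) := by
    have : what1 - wt = (wt1 - wt) - c • ones := by
      rw [hwhat1]; abel
    have hno : ‖c • ones‖ ^ 2 = c ^ 2 * (P : ℝ) := by
      have hn : ‖ones‖ ^ 2 = (P : ℝ) := by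
        rw [← real_inner_self_eq_norm_sq, honesones]
      rw [norm_smul, mul_pow, hn]
      simp [sq_abs]
    rw [hDFS, this, norm_sub_sq_real, hv, hno]
  have hK' : (K : ℝ) ≠ 0 := by positivity
  rw [hDFA, hDFS2, hc]
  field_simp
  ring
end

section
/- Let K ≥ 1, 0 ≤ I ≤ K with I ≥ 1 and P ≥ 1, set S = K − I, let w^t ∈ ℝ^P, Δw_1, …, Δw_K ∈ ℝ^P, and define w^{t+1} = w^t + (1/K)·Σ_{k=1}^K Δw_k, m^t = (1/P)·⟨w^t, 𝟙⟩, m^{t+1} = (1/P)·⟨w^{t+1}, 𝟙⟩, ŵ^{t+1} = w^{t+1} − (I/K)·m^{t+1}·𝟙, D_FA = ‖w^{t+1} − w^t‖, and D_FS = ‖ŵ^{t+1} − w^t‖. If m^{t+1} > 0, then D_FA² − D_FS² > 0 if and only if (K + S)/(2K) > m^t/m^{t+1}, and D_FA² − D_FS² < 0 if and only if (K + S)/(2K) < m^t/m^{t+1}. -/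
open Finset
open scoped RealInnerProductSpace

set_option maxHeartbeats 1000000

/-- **Sign characterization of the divergence comparison (Theorem 2 of the paper).**
If `m^{t+1} > 0`, then `D_FA² − D_FS² > 0` iff `(K+S)/(2K) > m^t/m^{t+1}`,
and `D_FA² − D_FS² < 0` iff `(K+S)/(2K) < m^t/m^{t+1}`. -/
theorem fedshift_divergence_sign
    (P K I S : ℕ) (hK : 1 ≤ K) (hI : 1 ≤ I) (hP : 1 ≤ P)
    (hIK : I ≤ K) (hS : I + S = K)
    (wt : EuclideanSpace ℝ (Fin P))
    (Δw : Fin K → EuclideanSpace ℝ (Fin P))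
    (ones : EuclideanSpace ℝ (Fin P)) (hones : ∀ p, ones p = 1)
    (wt1 : EuclideanSpace ℝ (Fin P))
    (hwt1 : wt1 = wt + (K : ℝ)⁻¹ • ∑ k, Δw k)
    (mt mt1 : ℝ)
    (hmt : mt = (1 / (P : ℝ)) * ⟪wt, ones⟫)
    (hmt1 : mt1 = (1 / (P : ℝ)) * ⟪wt1, ones⟫)
    (what1 : EuclideanSpace ℝ (Fin P))
    (hwhat1 : what1 = wt1 - (((I : ℝ) / K) * mt1) • ones)
    (DFA DFS : ℝ)
    (hDFA : DFA = ‖wt1 - wt‖)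
    (hDFS : DFS = ‖what1 - wt‖)
    (hmt1pos : 0 < mt1) :
    (DFA ^ 2 - DFS ^ 2 > 0 ↔ ((K : ℝ) + S) / (2 * K) > mt / mt1) ∧
    (DFA ^ 2 - DFS ^ 2 < 0 ↔ ((K : ℝ) + S) / (2 * K) < mt / mt1) := by
  have hPpos : (0:ℝ) < P := by exact_mod_cast hP
  have hKpos : (0:ℝ) < K := by exact_mod_cast hK
  have hIpos : (0:ℝ) < I := by exact_mod_cast hI
  have hoo : ⟪ones, ones⟫ = (P:ℝ) := by
    rw [PiLp.inner_apply]; simp [hones]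
  have hwtones : ⟪wt, ones⟫ = (P:ℝ) * mt := by
    rw [hmt]; field_simp
  have hwt1ones : ⟪wt1, ones⟫ = (P:ℝ) * mt1 := by
    rw [hmt1]; field_simp
  set c : ℝ := ((I : ℝ) / K) * mt1 with hc
  have hvones : ⟪wt1 - wt, ones⟫ = (P:ℝ) * mt1 - (P:ℝ) * mt := by
    rw [inner_sub_left, hwtones, hwt1ones]
  have hsplit : what1 - wt = (wt1 - wt) - c • ones := by
    rw [hwhat1]; abel
  have hDFA2 : DFA ^ 2 = ⟪wt1 - wt, wt1 - wt⟫ := by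
    rw [hDFA, ← real_inner_self_eq_norm_sq]
  have hDFS2 : DFS ^ 2 = ⟪wt1 - wt, wt1 - wt⟫ - 2 * c * ((P:ℝ) * mt1 - (P:ℝ) * mt) + c ^ 2 * P := by
    rw [hDFS, ← real_inner_self_eq_norm_sq, hsplit]
    have hvones' : ⟪ones, wt1 - wt⟫ = (P:ℝ) * mt1 - (P:ℝ) * mt := by
      rw [real_inner_comm]; exact hvones
    rw [inner_sub_sub_self]
    simp only [real_inner_smul_left, real_inner_smul_right, hoo, hvones, hvones']
    ring
  have hdiff : DFA ^ 2 - DFS ^ 2 = (c * P) * (2 * (mt1 - mt) - c) := by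
    rw [hDFA2, hDFS2]; ring
  have hcP : 0 < c * P := by positivity
  set B : ℝ := 2 * (mt1 - mt) - c with hBdef
  have hKS : (S : ℝ) = (K : ℝ) - I := by
    have : (I : ℝ) + S = K := by exact_mod_cast hS
    linarith
  have hBK : B * K = 2 * K * mt1 - 2 * K * mt - I * mt1 := by
    rw [hBdef, hc]; field_simp
  have h2K : (0:ℝ) < 2 * K := by linarith
  have hB : (0 < B ↔ ((K : ℝ) + S) / (2 * K) > mt / mt1) ∧
      (B < 0 ↔ ((K : ℝ) + S) / (2 * K) < mt / mt1) := by
    rw [hKS]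
    constructor
    · rw [gt_iff_lt, div_lt_div_iff₀ hmt1pos h2K]
      constructor <;> intro h
      · nlinarith [mul_pos h hKpos]
      · nlinarith
    · rw [div_lt_div_iff₀ h2K hmt1pos]
      constructor <;> intro h
      · nlinarith [mul_pos (neg_pos.mpr h) hKpos]
      · nlinarith
  rw [hdiff]
  constructor
  · rw [gt_iff_lt, ← hB.1]
    constructor
    · intro h
      by_contra h'
      push_neg at h'
      nlinarith [mul_nonpos_of_nonneg_of_nonpos hcP.le h']
    · intro h; exact mul_pos hcP h
  · rw [← hB.2]
    constructor
    · intro h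
      by_contra h'
      push_neg at h'
      nlinarith [mul_nonneg hcP.le h']
    · intro h; exact mul_neg_of_pos_of_neg hcP h
end

section
/- Let N ≥ 1, let p_1, …, p_N ≥ 0 with Σ_{k=1}^N p_k = 1, let E ≥ 1 and G ≥ 0, let η : ℕ → ℝ be a nonincreasing sequence of nonnegative step sizes, let τ₀ ≤ τ be natural numbers with τ − τ₀ ≤ E − 1 and η_{τ₀} ≤ 2·η_τ, let w₀ ∈ ℝ^P, and for each client k and each step s with τ₀ ≤ s ≤ τ − 1 let g_k^s ∈ ℝ^P satisfy ‖g_k^s‖ ≤ G. Define w_k^τ = w₀ − Σ_{s=τ₀}^{τ−1} η_s·g_k^s and w̄^τ = Σ_{k=1}^N p_k·w_k^τ. Then Σ_{k=1}^N p_k·‖w̄^τ − w_k^τ‖² ≤ 4·η_τ²·(E − 1)²·G². -/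
open Finset

/-- **Bounded divergence of local models (deterministic Lemma 3 of the paper).**
Within one block of at most `E` local steps started from the common model `w₀` at
synchronization step `τ₀`, the `p`-weighted squared divergence of the local models
from their average is at most `4·η_τ²·(E−1)²·G²`. -/
theorem local_model_divergence_bound
    (P N : ℕ) (hN : 1 ≤ N)
    (p : Fin N → ℝ) (hp : ∀ k, 0 ≤ p k) (hpsum : ∑ k, p k = 1)
    (E : ℕ) (hE : 1 ≤ E) (G : ℝ) (hG : 0 ≤ G)
    (η : ℕ → ℝ) (hηnonneg : ∀ s, 0 ≤ η s) (hηanti : ∀ s t, s ≤ t → η t ≤ η s)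
    (τ₀ τ : ℕ) (hτ₀τ : τ₀ ≤ τ) (hblock : τ - τ₀ ≤ E - 1)
    (hη2 : η τ₀ ≤ 2 * η τ)
    (w₀ : EuclideanSpace ℝ (Fin P))
    (g : Fin N → ℕ → EuclideanSpace ℝ (Fin P))
    (hg : ∀ k, ∀ s, τ₀ ≤ s → s ≤ τ - 1 → ‖g k s‖ ≤ G)
    (w : Fin N → EuclideanSpace ℝ (Fin P))
    (hw : ∀ k, w k = w₀ - ∑ s ∈ Finset.Ico τ₀ τ, η s • g k s)
    (wbar : EuclideanSpace ℝ (Fin P))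
    (hwbar : wbar = ∑ k, p k • w k) :
    ∑ k, p k * ‖wbar - w k‖ ^ 2 ≤ 4 * (η τ) ^ 2 * ((E : ℝ) - 1) ^ 2 * G ^ 2 := by
  classical
  have hE1 : (1:ℝ) ≤ (E:ℝ) := by exact_mod_cast hE
  set a : Fin N → EuclideanSpace ℝ (Fin P) :=
    fun k => ∑ s ∈ Finset.Ico τ₀ τ, η s • g k s with ha
  set m : EuclideanSpace ℝ (Fin P) := ∑ j, p j • a j with hm
  set B : ℝ := 2 * η τ * ((E:ℝ) - 1) * G with hB
  have hBnn : 0 ≤ B := by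
    have := hηnonneg τ
    have : (0:ℝ) ≤ (E:ℝ) - 1 := by linarith
    positivity
  -- bound on each a k
  have haB : ∀ k, ‖a k‖ ≤ B := by
    intro k
    calc ‖a k‖ ≤ ∑ s ∈ Finset.Ico τ₀ τ, ‖η s • g k s‖ := norm_sum_le _ _
      _ ≤ ∑ s ∈ Finset.Ico τ₀ τ, (2 * η τ) * G := by
          apply Finset.sum_le_sum
          intro s hs
          rw [Finset.mem_Ico] at hs
          rw [norm_smul, Real.norm_eq_abs, abs_of_nonneg (hηnonneg s)]
          have h1 : η s ≤ 2 * η τ := le_trans (hηanti τ₀ s hs.1) hη2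
          have h2 : ‖g k s‖ ≤ G := hg k s hs.1 (Nat.le_pred_of_lt hs.2)
          exact mul_le_mul h1 h2 (norm_nonneg _) (by linarith [hηnonneg τ])
      _ = ((τ - τ₀ : ℕ) : ℝ) * ((2 * η τ) * G) := by
          rw [Finset.sum_const, Nat.card_Ico, nsmul_eq_mul]
      _ ≤ ((E:ℝ) - 1) * ((2 * η τ) * G) := by
          apply mul_le_mul_of_nonneg_right
          · have : ((τ - τ₀ : ℕ) : ℝ) ≤ ((E - 1 : ℕ) : ℝ) := by exact_mod_cast hblock
            rwa [Nat.cast_sub hE, Nat.cast_one] at this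
          · have := hηnonneg τ; positivity
      _ = B := by ring
  -- rewrite wbar - w k
  have hdiff : ∀ k, wbar - w k = a k - m := by
    intro k
    have : wbar = w₀ - m := by
      rw [hwbar]
      have : ∀ j, p j • w j = p j • w₀ - p j • a j := by
        intro j; rw [hw j, smul_sub]
      simp_rw [this, Finset.sum_sub_distrib, ← Finset.sum_smul, hpsum, one_smul]
      rfl
    rw [this, hw k]
    abel
  -- expand the sum
  have hinner : ∑ k, p k * ‖wbar - w k‖ ^ 2
      = (∑ k, p k * ‖a k‖ ^ 2) - ‖m‖ ^ 2 := by
    have expand : ∀ k, p k * ‖wbar - w k‖ ^ 2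
        = p k * ‖a k‖ ^ 2 - 2 * (p k * (inner ℝ (a k) m : ℝ)) + p k * ‖m‖ ^ 2 := by
      intro k
      rw [hdiff k, norm_sub_sq_real]
      ring
    simp_rw [expand]
    rw [Finset.sum_add_distrib, Finset.sum_sub_distrib, ← Finset.mul_sum,
      ← Finset.sum_mul, hpsum]
    have : ∑ k, p k * (inner ℝ (a k) m : ℝ) = ‖m‖ ^ 2 := by
      have : ∑ k, p k * (inner ℝ (a k) m : ℝ) = (inner ℝ (∑ k, p k • a k) m : ℝ) := by
        rw [sum_inner]
        simp_rw [real_inner_smul_left]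
      rw [this, ← hm, real_inner_self_eq_norm_sq]
    rw [this]; ring
  rw [hinner]
  have h1 : ∑ k, p k * ‖a k‖ ^ 2 ≤ B ^ 2 := by
    calc ∑ k, p k * ‖a k‖ ^ 2 ≤ ∑ k, p k * B ^ 2 := by
          apply Finset.sum_le_sum
          intro k _
          exact mul_le_mul_of_nonneg_left
            (pow_le_pow_left₀ (norm_nonneg _) (haB k) 2) (hp k)
      _ = B ^ 2 := by rw [← Finset.sum_mul, hpsum, one_mul]
  have hB2 : B ^ 2 = 4 * (η τ) ^ 2 * ((E:ℝ) - 1) ^ 2 * G ^ 2 := by rw [hB]; ring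
  nlinarith [sq_nonneg ‖m‖]
end

section
/- Let P ≥ 1, let N ≥ 1, let p_1, …, p_N ≥ 0 with Σ_{k=1}^N p_k = 1, and for each k let F_k : ℝ^P → ℝ be differentiable, μ-strongly convex, and L-smooth (its gradient is L-Lipschitz) with μ > 0 and L > 0. Let F = Σ_k p_k·F_k, let w* be a global minimizer of F, let w_k* be a global minimizer of F_k for each k, and set Γ = F(w*) − Σ_k p_k·F_k(w_k*). Let w_1, …, w_N ∈ ℝ^P, w̄ = Σ_k p_k·w_k, ḡ = Σ_k p_k·∇F_k(w_k), let 0 < η ≤ 1/(4L), let α, m ∈ ℝ, let ε > 0, and let 𝟙 ∈ ℝ^P be the all-ones vector. Then ‖w̄ − η·ḡ − α·m·𝟙 − w*‖² ≤ (1 + 1/ε)·((1 − η·μ)·‖w̄ − w*‖² + 6·L·η²·Γ + 2·Σ_k p_k·‖w̄ − w_k‖²) + (1 + ε)·(α·m)²·P. -/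
open Finset Filter
open scoped RealInnerProductSpace Topology

section FedShiftAux
variable {E : Type*} [NormedAddCommGroup E] [InnerProductSpace ℝ E]

lemma fedshift_cheap_descent (f : E → ℝ) (f' : E → E) (L : ℝ)
    (hconv : ∀ x y, f x ≥ f y + ⟪x - y, f' y⟫ )
    (hsm : ∀ x y, ‖f' x - f' y‖ ≤ L * ‖x - y‖) (a b : E) :
    f b ≤ f a + ⟪b - a, f' a⟫ + L * ‖b - a‖ ^ 2 := by
  have h := hconv a b
  have h1 : ⟪a - b, f' b⟫ = -⟪b - a, f' b⟫ := by
    rw [← neg_sub, inner_neg_left]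
  have h2 : ⟪b - a, f' b⟫ - ⟪b - a, f' a⟫ ≤ L * ‖b - a‖ ^ 2 := by
    have e : ⟪b - a, f' b⟫ - ⟪b - a, f' a⟫ = ⟪b - a, f' b - f' a⟫ := by
      rw [inner_sub_right]
    rw [e]
    calc ⟪b - a, f' b - f' a⟫ ≤ ‖b - a‖ * ‖f' b - f' a‖ := real_inner_le_norm _ _
      _ ≤ ‖b - a‖ * (L * ‖b - a‖) := by
          exact mul_le_mul_of_nonneg_left (hsm b a) (norm_nonneg _)
      _ = L * ‖b - a‖ ^ 2 := by ring
  linarith [h, h1 ▸ h]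

lemma fedshift_descent (f : E → ℝ) (f' : E → E) (L : ℝ)
    (hconv : ∀ x y, f x ≥ f y + ⟪x - y, f' y⟫ )
    (hsm : ∀ x y, ‖f' x - f' y‖ ≤ L * ‖x - y‖) (x y : E) :
    f y ≤ f x + ⟪y - x, f' x⟫ + L / 2 * ‖y - x‖ ^ 2 := by
  set d : E := y - x with hd
  set g : ℝ := ⟪y - x, f' x⟫ with hg
  have key : ∀ n : ℕ, 0 < n → f y ≤ f x + g + L / 2 * ‖d‖ ^ 2 + L * ‖d‖ ^ 2 / (2 * n) := by
    intro n hn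
    have hn' : (0:ℝ) < n := by exact_mod_cast hn
    have hn0 : (n:ℝ) ≠ 0 := ne_of_gt hn'
    have main : ∀ i : ℕ, i ≤ n →
        f (x + ((i : ℝ) / n) • d) ≤ f x + ((i : ℝ) / n) * g
          + L * ‖d‖ ^ 2 * ((i : ℝ) * ((i : ℝ) + 1)) / (2 * (n : ℝ) ^ 2) := by
      intro i
      induction i with
      | zero => intro _; simp
      | succ i ih =>
        intro hi
        have IH := ih (Nat.le_of_succ_le hi)
        push_cast
        set a : E := x + ((i : ℝ) / n) • d with ha
        set b : E := x + (((i : ℝ) + 1) / n) • d with hb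
        have hba : b - a = ((1:ℝ) / n) • d := by
          rw [hb, ha, add_sub_add_left_eq_sub, ← sub_smul]
          congr 1
          field_simp
          ring
        have hax : a - x = ((i : ℝ) / n) • d := by rw [ha]; abel
        have step := fedshift_cheap_descent f f' L hconv hsm a b
        have hinner1 : ⟪b - a, f' a⟫ = (1 / (n:ℝ)) * ⟪d, f' a⟫ := by
          rw [hba, real_inner_smul_left]
        have hinner2 : ⟪d, f' a⟫ ≤ g + L * ((i : ℝ) / n) * ‖d‖ ^ 2 := by
          have e : ⟪d, f' a⟫ - g = ⟪d, f' a - f' x⟫ := by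
            rw [hg, hd, inner_sub_right]
          have h4 : ⟪d, f' a - f' x⟫ ≤ ‖d‖ * (L * ‖a - x‖) :=
            le_trans (real_inner_le_norm _ _)
              (mul_le_mul_of_nonneg_left (hsm a x) (norm_nonneg _))
          have hnax : ‖a - x‖ = ((i : ℝ) / n) * ‖d‖ := by
            rw [hax, norm_smul, Real.norm_eq_abs,
              abs_of_nonneg (by positivity : (0:ℝ) ≤ (i : ℝ) / n)]
          rw [hnax] at h4
          nlinarith [h4, e]
        have hnb : ‖b - a‖ ^ 2 = (1 / (n:ℝ)) ^ 2 * ‖d‖ ^ 2 := by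
          rw [hba, norm_smul, Real.norm_eq_abs,
            abs_of_nonneg (by positivity : (0:ℝ) ≤ 1 / (n:ℝ)), mul_pow]
        have expand : f b ≤ f a + (1/(n:ℝ)) * ⟪d, f' a⟫ + L * ((1/(n:ℝ))^2 * ‖d‖^2) := by
          rw [← hinner1, ← hnb]; linarith [step]
        have h3 : (1/(n:ℝ)) * ⟪d, f' a⟫ ≤ (1/(n:ℝ)) * (g + L * ((i : ℝ) / n) * ‖d‖ ^ 2) :=
          mul_le_mul_of_nonneg_left hinner2 (by positivity)
        have idL : L * ‖d‖ ^ 2 * (((i:ℝ)+1) * (((i:ℝ)+1) + 1)) / (2 * (n:ℝ) ^ 2)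
            = L * ‖d‖ ^ 2 * ((i:ℝ) * ((i:ℝ) + 1)) / (2 * (n:ℝ) ^ 2)
              + ((1/(n:ℝ)) * (L * ((i : ℝ) / n) * ‖d‖ ^ 2) + L * ((1/(n:ℝ))^2 * ‖d‖^2)) := by
          field_simp
          ring
        have idg : (((i:ℝ)+1) / n) * g = ((i:ℝ) / n) * g + (1/(n:ℝ)) * g := by ring
        rw [idg, idL]
        linarith [expand, h3, IH]
    have hmn := main n le_rfl
    have hyn : x + ((n : ℝ) / n) • d = y := by
      rw [div_self hn0, one_smul, hd]; abel
    rw [hyn] at hmn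
    have e2 : ((n:ℝ) / n) * g = g := by rw [div_self hn0, one_mul]
    have e3 : L * ‖d‖ ^ 2 * ((n:ℝ) * ((n:ℝ) + 1)) / (2 * (n:ℝ) ^ 2)
        = L / 2 * ‖d‖ ^ 2 + L * ‖d‖ ^ 2 / (2 * n) := by
      field_simp
    rw [e2, e3] at hmn
    linarith
  have hlim : Tendsto (fun n : ℕ => f x + g + L / 2 * ‖d‖ ^ 2 + L * ‖d‖ ^ 2 / (2 * n))
      atTop (𝓝 (f x + g + L / 2 * ‖d‖ ^ 2 + 0)) := by
    apply Tendsto.add tendsto_const_nhds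
    have he : (fun n : ℕ => L * ‖d‖ ^ 2 / (2 * n)) = fun n : ℕ => (L * ‖d‖ ^ 2 / 2) / n := by
      funext n; by_cases h : (n:ℝ) = 0 <;> field_simp <;> ring
    rw [he]
    exact tendsto_const_div_atTop_nhds_zero_nat _
  rw [add_zero] at hlim
  exact ge_of_tendsto hlim (eventually_atTop.2 ⟨1, fun n hn => key n hn⟩)

lemma fedshift_grad_sq_le (f : E → ℝ) (f' : E → E) (L : ℝ) (hL : 0 < L)
    (hdesc : ∀ x y, f y ≤ f x + ⟪y - x, f' x⟫ + L / 2 * ‖y - x‖ ^ 2)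
    (z : E) (hz : ∀ x, f z ≤ f x) (x : E) :
    ‖f' x‖ ^ 2 ≤ 2 * L * (f x - f z) := by
  have h := hdesc x (x - (1 / L) • f' x)
  have e1 : x - (1 / L) • f' x - x = -((1 / L) • f' x) := by abel
  have e2 : ⟪-((1 / L) • f' x), f' x⟫ = -(1 / L * ‖f' x‖ ^ 2) := by
    rw [inner_neg_left, real_inner_smul_left, real_inner_self_eq_norm_sq]
  have e3 : ‖-((1 / L) • f' x)‖ ^ 2 = (1 / L) ^ 2 * ‖f' x‖ ^ 2 := by
    rw [norm_neg, norm_smul, Real.norm_eq_abs, abs_of_nonneg (by positivity : (0:ℝ) ≤ 1 / L),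
      mul_pow]
  rw [e1, e2, e3] at h
  have h2 := hz (x - (1 / L) • f' x)
  have hL0 : L ≠ 0 := ne_of_gt hL
  have hkey : f z ≤ f x - 1 / (2 * L) * ‖f' x‖ ^ 2 := by
    have e4 : L / 2 * ((1 / L) ^ 2 * ‖f' x‖ ^ 2) - 1 / L * ‖f' x‖ ^ 2
        = -(1 / (2 * L) * ‖f' x‖ ^ 2) := by field_simp; ring
    nlinarith [h, h2]
  have e4 : ‖f' x‖ ^ 2 / (2 * L) = 1 / (2 * L) * ‖f' x‖ ^ 2 := by ring
  have h5 : ‖f' x‖ ^ 2 / (2 * L) ≤ f x - f z := by rw [e4]; linarith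
  rw [div_le_iff₀ (by positivity : (0:ℝ) < 2 * L)] at h5
  linarith

lemma fedshift_jensen {N : ℕ} (p : Fin N → ℝ) (hp : ∀ k, 0 ≤ p k)
    (hpsum : ∑ k, p k = 1) (v : Fin N → E) :
    ‖∑ k, p k • v k‖ ^ 2 ≤ ∑ k, p k * ‖v k‖ ^ 2 := by
  have h1 : ‖∑ k, p k • v k‖ ≤ ∑ k, p k * ‖v k‖ := by
    calc ‖∑ k, p k • v k‖ ≤ ∑ k, ‖p k • v k‖ := norm_sum_le _ _
      _ = ∑ k, p k * ‖v k‖ := by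
          refine Finset.sum_congr rfl fun k _ => ?_
          rw [norm_smul, Real.norm_eq_abs, abs_of_nonneg (hp k)]
  have h2 : (∑ k, p k * ‖v k‖) ^ 2 ≤ (∑ k, p k) * ∑ k, p k * ‖v k‖ ^ 2 := by
    have hcs := Finset.sum_mul_sq_le_sq_mul_sq Finset.univ
      (fun k => Real.sqrt (p k)) (fun k => Real.sqrt (p k) * ‖v k‖)
    have e1 : ∀ k : Fin N, Real.sqrt (p k) * (Real.sqrt (p k) * ‖v k‖) = p k * ‖v k‖ := by
      intro k; rw [← mul_assoc, Real.mul_self_sqrt (hp k)]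
    have e2 : ∀ k : Fin N, Real.sqrt (p k) ^ 2 = p k := fun k => Real.sq_sqrt (hp k)
    have e3 : ∀ k : Fin N, (Real.sqrt (p k) * ‖v k‖) ^ 2 = p k * ‖v k‖ ^ 2 := by
      intro k; rw [mul_pow, Real.sq_sqrt (hp k)]
    calc (∑ k, p k * ‖v k‖) ^ 2 = (∑ k, Real.sqrt (p k) * (Real.sqrt (p k) * ‖v k‖)) ^ 2 := by
          rw [Finset.sum_congr rfl fun k _ => (e1 k).symm]
      _ ≤ (∑ k, Real.sqrt (p k) ^ 2) * ∑ k, (Real.sqrt (p k) * ‖v k‖) ^ 2 := hcs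
      _ = (∑ k, p k) * ∑ k, p k * ‖v k‖ ^ 2 := by
          rw [Finset.sum_congr rfl fun k _ => e2 k, Finset.sum_congr rfl fun k _ => e3 k]
  calc ‖∑ k, p k • v k‖ ^ 2 ≤ (∑ k, p k * ‖v k‖) ^ 2 :=
        pow_le_pow_left₀ (norm_nonneg _) h1 2
    _ ≤ (∑ k, p k) * ∑ k, p k * ‖v k‖ ^ 2 := h2
    _ = ∑ k, p k * ‖v k‖ ^ 2 := by rw [hpsum, one_mul]

lemma fedshift_young (a b : E) (ε : ℝ) (hε : 0 < ε) :
    ‖a - b‖ ^ 2 ≤ (1 + 1 / ε) * ‖a‖ ^ 2 + (1 + ε) * ‖b‖ ^ 2 := by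
  have h := norm_sub_sq_real a b
  have h2 : -⟪a, b⟫ ≤ ‖a‖ * ‖b‖ := by
    have h1 := abs_real_inner_le_norm a b
    cases abs_le.mp h1 with
    | intro ha _ => linarith
  have h3 : 2 * (‖a‖ * ‖b‖) ≤ (1 / ε) * ‖a‖ ^ 2 + ε * ‖b‖ ^ 2 := by
    have key : 0 ≤ (1 / ε) * (‖a‖ - ε * ‖b‖) ^ 2 := by positivity
    have e : (1 / ε) * (‖a‖ - ε * ‖b‖) ^ 2
        = (1 / ε) * ‖a‖ ^ 2 - 2 * (‖a‖ * ‖b‖) * (ε * (1/ε)) + ε ^ 2 * ‖b‖ ^ 2 * (1/ε) := by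
      ring
    have hinv : ε * (1/ε) = 1 := mul_one_div_cancel (ne_of_gt hε)
    have e2 : ε ^ 2 * ‖b‖ ^ 2 * (1/ε) = ε * ‖b‖ ^ 2 := by
      field_simp
    rw [e, hinv, e2] at key
    linarith
  nlinarith [h, h2, h3]

end FedShiftAux

set_option maxHeartbeats 1600000 in
/-- **One-step recursion of FedShift (deterministic Lemma 1 of the paper).**
For `μ`-strongly convex, `L`-smooth local objectives `F_k` with minimizers `w_k*`,
global objective `F = Σ_k p_k F_k` with minimizer `w*`, heterogeneity
`Γ = F(w*) − Σ_k p_k F_k(w_k*)`, step size `0 < η ≤ 1/(4L)`, and shift `α·m·𝟙`,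
the shifted averaged step satisfies the stated bound. -/
theorem fedshift_one_step_recursion
    (P N : ℕ) (hP : 1 ≤ P) (hN : 1 ≤ N)
    (p : Fin N → ℝ) (hp : ∀ k, 0 ≤ p k) (hpsum : ∑ k, p k = 1)
    (μ L : ℝ) (hμ : 0 < μ) (hL : 0 < L)
    (F : Fin N → EuclideanSpace ℝ (Fin P) → ℝ)
    (F' : Fin N → EuclideanSpace ℝ (Fin P) → EuclideanSpace ℝ (Fin P))
    (hgrad : ∀ k x, HasGradientAt (F k) (F' k x) x)
    (hsc : ∀ k x y, F k x ≥ F k y + ⟪x - y, F' k y⟫ + μ / 2 * ‖x - y‖ ^ 2)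
    (hsmooth : ∀ k x y, ‖F' k x - F' k y‖ ≤ L * ‖x - y‖)
    (wstar : EuclideanSpace ℝ (Fin P))
    (hwstar : ∀ x, ∑ k, p k * F k wstar ≤ ∑ k, p k * F k x)
    (wkstar : Fin N → EuclideanSpace ℝ (Fin P))
    (hwkstar : ∀ k x, F k (wkstar k) ≤ F k x)
    (Γ : ℝ) (hΓ : Γ = (∑ k, p k * F k wstar) - ∑ k, p k * F k (wkstar k))
    (w : Fin N → EuclideanSpace ℝ (Fin P))
    (wbar : EuclideanSpace ℝ (Fin P)) (hwbar : wbar = ∑ k, p k • w k)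
    (gbar : EuclideanSpace ℝ (Fin P)) (hgbar : gbar = ∑ k, p k • F' k (w k))
    (η : ℝ) (hηpos : 0 < η) (hη : η ≤ 1 / (4 * L))
    (α m : ℝ) (ε : ℝ) (hε : 0 < ε)
    (ones : EuclideanSpace ℝ (Fin P)) (hones : ∀ q, ones q = 1) :
    ‖wbar - η • gbar - (α * m) • ones - wstar‖ ^ 2
      ≤ (1 + 1 / ε) * ((1 - η * μ) * ‖wbar - wstar‖ ^ 2 + 6 * L * η ^ 2 * Γ
            + 2 * ∑ k, p k * ‖wbar - w k‖ ^ 2)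
        + (1 + ε) * (α * m) ^ 2 * P := by
  have hηL : η * (4 * L) ≤ 1 := by
    rw [le_div_iff₀ (by positivity : (0:ℝ) < 4 * L)] at hη
    exact hη
  -- basic consequences of the hypotheses
  have hconv : ∀ k (x y : EuclideanSpace ℝ (Fin P)), F k x ≥ F k y + ⟪x - y, F' k y⟫ := by
    intro k x y
    have h0 : 0 ≤ μ / 2 * ‖x - y‖ ^ 2 := by positivity
    linarith [hsc k x y]
  have hdesc : ∀ k (x y : EuclideanSpace ℝ (Fin P)),
      F k y ≤ F k x + ⟪y - x, F' k x⟫ + L / 2 * ‖y - x‖ ^ 2 :=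
    fun k => fedshift_descent (F k) (F' k) L (hconv k) (hsmooth k)
  have hgsq : ∀ k (x : EuclideanSpace ℝ (Fin P)),
      ‖F' k x‖ ^ 2 ≤ 2 * L * (F k x - F k (wkstar k)) :=
    fun k x => fedshift_grad_sq_le (F k) (F' k) L hL (hdesc k) (wkstar k) (hwkstar k) x
  -- scalar abbreviations
  set S1 : ℝ := ∑ k, p k * ‖wbar - w k‖ ^ 2 with hS1def
  set SW : ℝ := ∑ k, p k * ‖w k - wstar‖ ^ 2 with hSWdef
  set SG : ℝ := ∑ k, p k * ‖F' k (w k)‖ ^ 2 with hSGdef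
  set SGb : ℝ := ∑ k, p k * ‖F' k wbar‖ ^ 2 with hSGbdef
  set Fw : ℝ := ∑ k, p k * F k (w k) with hFwdef
  set Fb : ℝ := ∑ k, p k * F k wbar with hFbdef
  set Fs : ℝ := ∑ k, p k * F k wstar with hFsdef
  set Fks : ℝ := ∑ k, p k * F k (wkstar k) with hFksdef
  have hS1 : 0 ≤ S1 := by
    rw [hS1def]
    exact Finset.sum_nonneg fun k _ => mul_nonneg (hp k) (sq_nonneg _)
  have hΓ0 : 0 ≤ Γ := by
    rw [hΓ]
    have : Fks ≤ Fs := by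
      rw [hFksdef, hFsdef]
      exact Finset.sum_le_sum fun k _ => mul_le_mul_of_nonneg_left (hwkstar k wstar) (hp k)
    linarith
  have hFbs : Fs ≤ Fb := hwstar wbar
  -- Jensen bounds
  have hdsum : wbar - wstar = ∑ k, p k • (w k - wstar) := by
    rw [hwbar]
    simp only [smul_sub, Finset.sum_sub_distrib, ← Finset.sum_smul, hpsum, one_smul]
  have hJd : ‖wbar - wstar‖ ^ 2 ≤ SW := by
    rw [hdsum]
    exact fedshift_jensen p hp hpsum _
  have hJg : ‖gbar‖ ^ 2 ≤ SG := by
    rw [hgbar]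
    exact fedshift_jensen p hp hpsum _
  -- gradient-square bounds on sums
  have hSGle : SG ≤ 2 * L * (Fw - Fks) := by
    calc SG ≤ ∑ k, p k * (2 * L * (F k (w k) - F k (wkstar k))) := by
          rw [hSGdef]
          exact Finset.sum_le_sum fun k _ => mul_le_mul_of_nonneg_left (hgsq k (w k)) (hp k)
      _ = 2 * L * (Fw - Fks) := by
          rw [hFwdef, hFksdef, mul_sub, Finset.mul_sum, Finset.mul_sum,
            ← Finset.sum_sub_distrib]
          exact Finset.sum_congr rfl fun k _ => by ring
  have hSGble : SGb ≤ 2 * L * (Fb - Fks) := by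
    calc SGb ≤ ∑ k, p k * (2 * L * (F k wbar - F k (wkstar k))) := by
          rw [hSGbdef]
          exact Finset.sum_le_sum fun k _ => mul_le_mul_of_nonneg_left (hgsq k wbar) (hp k)
      _ = 2 * L * (Fb - Fks) := by
          rw [hFbdef, hFksdef, mul_sub, Finset.mul_sum, Finset.mul_sum,
            ← Finset.sum_sub_distrib]
          exact Finset.sum_congr rfl fun k _ => by ring
  -- the "drift" lower bound (vii)
  have hvii : 0 ≤ 2 * η * Fw - 2 * η * Fb + S1 + η ^ 2 * SGb := by
    have per : ∀ k ∈ Finset.univ (α := Fin N), 0 ≤ p k *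
        (2 * η * F k (w k) - 2 * η * F k wbar + ‖wbar - w k‖ ^ 2 + η ^ 2 * ‖F' k wbar‖ ^ 2) := by
      intro k _
      apply mul_nonneg (hp k)
      have hc := hconv k (w k) wbar
      have hip : -⟪w k - wbar, F' k wbar⟫ ≤ ‖wbar - w k‖ * ‖F' k wbar‖ := by
        have h1 := abs_real_inner_le_norm (w k - wbar) (F' k wbar)
        rw [norm_sub_rev] at h1
        cases abs_le.mp h1 with
        | intro ha _ => linarith
      nlinarith [mul_le_mul_of_nonneg_left hip (by positivity : (0:ℝ) ≤ 2 * η),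
        sq_nonneg (‖wbar - w k‖ - η * ‖F' k wbar‖)]
    have sum0 := Finset.sum_nonneg per
    have expand : ∑ k, p k * (2 * η * F k (w k) - 2 * η * F k wbar + ‖wbar - w k‖ ^ 2
          + η ^ 2 * ‖F' k wbar‖ ^ 2)
        = 2 * η * Fw - 2 * η * Fb + S1 + η ^ 2 * SGb := by
      rw [hFwdef, hFbdef, hS1def, hSGbdef]
      simp only [Finset.mul_sum, ← Finset.sum_sub_distrib, ← Finset.sum_add_distrib]
      exact Finset.sum_congr rfl fun k _ => by ring
    rw [expand] at sum0
    exact sum0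
  -- the main inner product bound
  have hip : ⟪wbar - wstar, gbar⟫ = ∑ k, p k * ⟪wbar - wstar, F' k (w k)⟫ := by
    rw [hgbar, inner_sum]
    exact Finset.sum_congr rfl fun k _ => real_inner_smul_right _ _ _
  have hiner : -(2 * η) * ⟪wbar - wstar, gbar⟫
      ≤ S1 + η ^ 2 * SG + 2 * η * (Fs - Fw) - η * μ * SW := by
    have perk : ∀ k ∈ Finset.univ (α := Fin N),
        -(2 * η) * (p k * ⟪wbar - wstar, F' k (w k)⟫)
          ≤ p k * (‖wbar - w k‖ ^ 2 + η ^ 2 * ‖F' k (w k)‖ ^ 2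
              + 2 * η * (F k wstar - F k (w k)) - η * μ * ‖w k - wstar‖ ^ 2) := by
      intro k _
      have hdecomp : ⟪wbar - wstar, F' k (w k)⟫
          = ⟪wbar - w k, F' k (w k)⟫ + ⟪w k - wstar, F' k (w k)⟫ := by
        rw [← inner_add_left, sub_add_sub_cancel]
      have hA : -(2 * η) * ⟪wbar - w k, F' k (w k)⟫
          ≤ ‖wbar - w k‖ ^ 2 + η ^ 2 * ‖F' k (w k)‖ ^ 2 := by
        have hip2 : -⟪wbar - w k, F' k (w k)⟫ ≤ ‖wbar - w k‖ * ‖F' k (w k)‖ := by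
          have h1 := abs_real_inner_le_norm (wbar - w k) (F' k (w k))
          cases abs_le.mp h1 with
          | intro ha _ => linarith
        nlinarith [mul_le_mul_of_nonneg_left hip2 (by positivity : (0:ℝ) ≤ 2 * η),
          sq_nonneg (‖wbar - w k‖ - η * ‖F' k (w k)‖)]
      have hB : -(2 * η) * ⟪w k - wstar, F' k (w k)⟫
          ≤ 2 * η * (F k wstar - F k (w k)) - η * μ * ‖w k - wstar‖ ^ 2 := by
        have hsck := hsc k wstar (w k)
        have e1 : ⟪wstar - w k, F' k (w k)⟫ = -⟪w k - wstar, F' k (w k)⟫ := by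
          rw [← neg_sub, inner_neg_left]
        have e2 : ‖wstar - w k‖ = ‖w k - wstar‖ := norm_sub_rev _ _
        rw [e1, e2] at hsck
        nlinarith [hsck, hηpos, hμ]
      have hcombined : -(2 * η) * ⟪wbar - wstar, F' k (w k)⟫
          ≤ ‖wbar - w k‖ ^ 2 + η ^ 2 * ‖F' k (w k)‖ ^ 2
            + 2 * η * (F k wstar - F k (w k)) - η * μ * ‖w k - wstar‖ ^ 2 := by
        rw [hdecomp]
        linarith [hA, hB]
      calc -(2 * η) * (p k * ⟪wbar - wstar, F' k (w k)⟫)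
          = p k * (-(2 * η) * ⟪wbar - wstar, F' k (w k)⟫) := by ring
        _ ≤ p k * (‖wbar - w k‖ ^ 2 + η ^ 2 * ‖F' k (w k)‖ ^ 2
              + 2 * η * (F k wstar - F k (w k)) - η * μ * ‖w k - wstar‖ ^ 2) :=
            mul_le_mul_of_nonneg_left hcombined (hp k)
    calc -(2 * η) * ⟪wbar - wstar, gbar⟫
        = ∑ k, -(2 * η) * (p k * ⟪wbar - wstar, F' k (w k)⟫) := by
          rw [hip, Finset.mul_sum]
      _ ≤ ∑ k, p k * (‖wbar - w k‖ ^ 2 + η ^ 2 * ‖F' k (w k)‖ ^ 2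
            + 2 * η * (F k wstar - F k (w k)) - η * μ * ‖w k - wstar‖ ^ 2) :=
          Finset.sum_le_sum perk
      _ = S1 + η ^ 2 * SG + 2 * η * (Fs - Fw) - η * μ * SW := by
          rw [hS1def, hSGdef, hFsdef, hFwdef, hSWdef]
          simp only [Finset.mul_sum, ← Finset.sum_sub_distrib, ← Finset.sum_add_distrib]
          exact Finset.sum_congr rfl fun k _ => by ring
  -- expansion of the squared norm
  have hsq : ‖wbar - η • gbar - wstar‖ ^ 2
      = ‖wbar - wstar‖ ^ 2 - 2 * η * ⟪wbar - wstar, gbar⟫ + η ^ 2 * ‖gbar‖ ^ 2 := by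
    have e : wbar - η • gbar - wstar = (wbar - wstar) - η • gbar := by
      rw [sub_right_comm]
    rw [e, norm_sub_sq_real, real_inner_smul_right, norm_smul, Real.norm_eq_abs, mul_pow,
      sq_abs]
    ring
  -- the core (unshifted) bound
  have hcore : ‖wbar - η • gbar - wstar‖ ^ 2
      ≤ (1 - η * μ) * ‖wbar - wstar‖ ^ 2 + 6 * L * η ^ 2 * Γ + 2 * S1 := by
    have hg2 : η ^ 2 * ‖gbar‖ ^ 2 ≤ η ^ 2 * SG :=
      mul_le_mul_of_nonneg_left hJg (sq_nonneg η)
    have hd2 : η * μ * ‖wbar - wstar‖ ^ 2 ≤ η * μ * SW :=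
      mul_le_mul_of_nonneg_left hJd (by positivity)
    have hΓks : 0 ≤ Fs - Fks := by rw [hΓ] at hΓ0; exact hΓ0
    have hY : -(S1 + 2 * L * η ^ 2 * (Fs - Fks)) ≤ 2 * η * (Fw - Fs) := by
      have t1 := mul_le_mul_of_nonneg_left hSGble (sq_nonneg η)
      have t2 : (0:ℝ) ≤ (2 * η - 2 * L * η ^ 2) * (Fb - Fs) :=
        mul_nonneg (by nlinarith) (sub_nonneg.mpr hFbs)
      nlinarith [hvii, t1, t2]
    have hscalar : 2 * η ^ 2 * SG + 2 * η * (Fs - Fw) ≤ S1 + 6 * L * η ^ 2 * (Fs - Fks) := by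
      have t1 := mul_le_mul_of_nonneg_left hSGle (by positivity : (0:ℝ) ≤ 2 * η ^ 2)
      have t2 : (0:ℝ) ≤ (1 - 2 * L * η) * (2 * η * (Fw - Fs) + (S1 + 2 * L * η ^ 2 * (Fs - Fks))) :=
        mul_nonneg (by nlinarith) (by linarith [hY])
      have t3 : (0:ℝ) ≤ 2 * L * η * S1 := mul_nonneg (by positivity) hS1
      have t4 : (0:ℝ) ≤ 4 * L ^ 2 * η ^ 3 * (Fs - Fks) :=
        mul_nonneg (by positivity) hΓks
      nlinarith [t1, t2, t3, t4]
    have hscalarΓ : 2 * η ^ 2 * SG + 2 * η * (Fs - Fw) ≤ S1 + 6 * L * η ^ 2 * Γ := by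
      rw [hΓ]; exact hscalar
    rw [hsq]
    linarith [hiner, hg2, hd2, hscalarΓ]
  -- combine with the shift term via Young's inequality
  have e0 : wbar - η • gbar - (α * m) • ones - wstar
      = (wbar - η • gbar - wstar) - (α * m) • ones := by
    rw [sub_right_comm]
  have hones2 : ‖(α * m) • ones‖ ^ 2 = (α * m) ^ 2 * P := by
    rw [norm_smul, mul_pow, Real.norm_eq_abs, sq_abs]
    congr 1
    rw [EuclideanSpace.norm_eq, Real.sq_sqrt (by positivity)]
    simp [hones]
  have hyoung := fedshift_young (wbar - η • gbar - wstar) ((α * m) • ones) ε hε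
  rw [hones2] at hyoung
  have h1 : (1 + 1 / ε) * ‖wbar - η • gbar - wstar‖ ^ 2
      ≤ (1 + 1 / ε) * ((1 - η * μ) * ‖wbar - wstar‖ ^ 2 + 6 * L * η ^ 2 * Γ + 2 * S1) :=
    mul_le_mul_of_nonneg_left hcore (by positivity)
  rw [e0]
  nlinarith [hyoung, h1]
end

section
/- Let ε, β, γ, μ > 0, B₁, B₂, M ≥ 0, υ ≥ 0, let τ ≥ 1 be a natural number, set η = β/(τ + γ), and let Δ_τ, Δ_{τ+1} ≥ 0 be real numbers. Assume: (i) Δ_{τ+1} ≤ (1 + 1/ε)·(1 − η·μ)·Δ_τ + B₁·η² + B₂·M; (ii) Δ_τ ≤ υ/(τ + γ); (iii) 1 − η·μ ≥ 0; and (iv) (1 − (1 + 1/ε)·β·μ + (1/ε)·(τ + γ))·υ + B₁·β² + B₂·M·(τ + γ)² ≤ 0. Then Δ_{τ+1} ≤ υ/(τ + γ + 1). -/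
/-- **Single induction step in the convergence proof of Theorem 1.**
If `Δ_{τ+1} ≤ (1+1/ε)(1−ημ)Δ_τ + B₁η² + B₂M` with `η = β/(τ+γ)`, the invariant
`Δ_τ ≤ υ/(τ+γ)` holds, `1 − ημ ≥ 0`, and
`(1 − (1+1/ε)βμ + (1/ε)(τ+γ))·υ + B₁β² + B₂M(τ+γ)² ≤ 0`,
then `Δ_{τ+1} ≤ υ/(τ+γ+1)`. -/
theorem fedshift_induction_step
    (ε β γ μ B₁ B₂ M υ : ℝ)
    (hε : 0 < ε) (hβ : 0 < β) (hγ : 0 < γ) (hμ : 0 < μ)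
    (hB₁ : 0 ≤ B₁) (hB₂ : 0 ≤ B₂) (hM : 0 ≤ M) (hυ : 0 ≤ υ)
    (τ : ℕ) (hτ : 1 ≤ τ)
    (η : ℝ) (hη : η = β / ((τ : ℝ) + γ))
    (Δτ Δτ1 : ℝ) (hΔτ : 0 ≤ Δτ) (hΔτ1 : 0 ≤ Δτ1)
    (hrec : Δτ1 ≤ (1 + 1 / ε) * (1 - η * μ) * Δτ + B₁ * η ^ 2 + B₂ * M)
    (hinv : Δτ ≤ υ / ((τ : ℝ) + γ))
    (hstep : 0 ≤ 1 - η * μ)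
    (hneg : (1 - (1 + 1 / ε) * β * μ + (1 / ε) * ((τ : ℝ) + γ)) * υ
              + B₁ * β ^ 2 + B₂ * M * ((τ : ℝ) + γ) ^ 2 ≤ 0) :
    Δτ1 ≤ υ / ((τ : ℝ) + γ + 1) := by
  have hτ1 : (1 : ℝ) ≤ (τ : ℝ) := by exact_mod_cast hτ
  set t : ℝ := (τ : ℝ) + γ with ht
  have htpos : 0 < t := by positivity
  have hεpos : (0 : ℝ) < 1 + 1 / ε := by positivity
  have h1 : (1 + 1 / ε) * (1 - η * μ) * Δτ ≤ (1 + 1 / ε) * (1 - η * μ) * (υ / t) :=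
    mul_le_mul_of_nonneg_left hinv (mul_nonneg hεpos.le hstep)
  have h2 : Δτ1 ≤ (1 + 1 / ε) * (1 - η * μ) * (υ / t) + B₁ * η ^ 2 + B₂ * M := by
    linarith
  have e1 : (1 + 1 / ε) * (1 - η * μ) * (υ / t) + B₁ * η ^ 2 + B₂ * M
      = ((1 + 1 / ε) * (t - β * μ) * υ + B₁ * β ^ 2 + B₂ * M * t ^ 2) / t ^ 2 := by
    rw [hη]
    field_simp
  have hA : (1 + 1 / ε) * (t - β * μ) * υ + B₁ * β ^ 2 + B₂ * M * t ^ 2 ≤ υ * (t - 1) := by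
    nlinarith [hneg, hυ, hε]
  have hfin : ((1 + 1 / ε) * (t - β * μ) * υ + B₁ * β ^ 2 + B₂ * M * t ^ 2) / t ^ 2
      ≤ υ / (t + 1) := by
    rw [div_le_div_iff₀ (by positivity) (by linarith)]
    have hA' := mul_le_mul_of_nonneg_right hA (by linarith : (0:ℝ) ≤ t + 1)
    have hq : υ * (t - 1) * (t + 1) = υ * t ^ 2 - υ := by ring
    linarith
  calc Δτ1 ≤ _ := h2
    _ = _ := e1
    _ ≤ υ / (t + 1) := hfin
end
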